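/- arXiv:1109.3169 — 2 statements merged into one kernel-verified Lean document; each statement's English description precedes it below -/
import Mathlib

section
/- Let n ≥ 3 be an odd natural number, l ∈ ℕ with 2l + 1 ≤ n, ε ∈ {1, −1}, and j ∈ ℕ. Set J = n/2 + j. Then Z_ε((2l+1)/2; j) = ε · ( J · ∏_{a=1}^{l} (J² − a²) ) / ( (n/2) · ∏_{a=1}^{l} ((n/2)² − a²) ). In particular Z_ε((2l+1)/2; j) is a nonzero constant multiple, independent of j and ε, of ε · J(J² − 1²)···(J² − l²), the eigenvalue of D_{2l+1} = D̸(D̸² − 1²)···(D̸² − l²) on 𝒱_ε(j). -/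
/-- Case I spectral function on the spinor bundle over the odd sphere `Sⁿ`. -/
noncomputable def Zspec (n : ℕ) (ε r : ℝ) (j : ℕ) : ℝ :=
  ε * (Real.Gamma ((n : ℝ) / 2 + j + 1 / 2 + r) * Real.Gamma ((n : ℝ) / 2 + 1 / 2 - r)) /
    (Real.Gamma ((n : ℝ) / 2 + j + 1 / 2 - r) * Real.Gamma ((n : ℝ) / 2 + 1 / 2 + r))

private lemma gamma_add_nat (x : ℝ) (hx : 0 < x) (k : ℕ) :
    Real.Gamma (x + k) = (∏ i ∈ Finset.range k, (x + i)) * Real.Gamma x := by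
  induction k with
  | zero => simp
  | succ k ih =>
    have hne : x + k ≠ 0 := by positivity
    have : Real.Gamma (x + (k + 1 : ℕ)) = (x + k) * Real.Gamma (x + k) := by
      have := Real.Gamma_add_one hne
      rw [← this]; push_cast; ring_nf
    rw [this, ih, Finset.prod_range_succ]; ring

private lemma prod_poly (l : ℕ) (x : ℝ) :
    ∏ k ∈ Finset.range (2 * l + 1), (x - l + k) =
      x * ∏ a ∈ Finset.Icc 1 l, (x ^ 2 - (a : ℝ) ^ 2) := by
  induction l with
  | zero => simp
  | succ l ih =>
    have h1 : 2 * (l + 1) + 1 = (2 * l + 2) + 1 := by ring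
    rw [h1, Finset.prod_range_succ, Finset.prod_range_succ']
    have h2 : ∀ k : ℕ, (x - (l + 1 : ℕ) + ((k : ℕ) + 1 : ℕ) : ℝ) = x - l + k := by
      intro k; push_cast; ring
    simp only [h2]
    rw [ih, Finset.prod_Icc_succ_top (Nat.le_add_left 1 l)]
    push_cast
    ring

/-- At half-odd-integer order `2r = 2l + 1` with `2l + 1 ≤ n`, the spectral function equals
`ε · (J ∏_{a=1}^{l}(J² − a²)) / ((n/2) ∏_{a=1}^{l}((n/2)² − a²))` with `J = n/2 + j`;
the normalizing constant (the denominator) is nonzero and independent of `j` and `ε`, so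
`Z_ε((2l+1)/2; j)` is a nonzero constant multiple of the eigenvalue
`ε · J(J²−1²)···(J²−l²)` of `D_{2l+1}` on `𝒱_ε(j)`. -/
theorem Zspec_odd_order (n l : ℕ) (hn : Odd n) (hn3 : 3 ≤ n) (hl : 2 * l + 1 ≤ n)
    (ε : ℝ) (hε : ε = 1 ∨ ε = -1) (j : ℕ) :
    Zspec n ε ((2 * (l : ℝ) + 1) / 2) j =
      ε * (((n : ℝ) / 2 + j) * ∏ a ∈ Finset.Icc 1 l, (((n : ℝ) / 2 + j) ^ 2 - (a : ℝ) ^ 2)) /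
        (((n : ℝ) / 2) * ∏ a ∈ Finset.Icc 1 l, (((n : ℝ) / 2) ^ 2 - (a : ℝ) ^ 2)) ∧
    ((n : ℝ) / 2) * ∏ a ∈ Finset.Icc 1 l, (((n : ℝ) / 2) ^ 2 - (a : ℝ) ^ 2) ≠ 0 := by
  have hnl : (l : ℝ) < (n : ℝ) / 2 := by
    have : (2 * l + 1 : ℝ) ≤ n := by exact_mod_cast hl
    linarith
  have hm : (0 : ℝ) < (n : ℝ) / 2 - l := by linarith
  have hJ : (0 : ℝ) < (n : ℝ) / 2 + j - l := by
    have : (0 : ℝ) ≤ j := Nat.cast_nonneg j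
    linarith
  -- positivity of each factor
  have hfac : ∀ x : ℝ, 0 < x - l → ∀ k ∈ Finset.range (2 * l + 1), (0 : ℝ) < x - l + k := by
    intro x hx k _
    have : (0 : ℝ) ≤ k := Nat.cast_nonneg k
    linarith
  have hprodm : (0 : ℝ) < ∏ k ∈ Finset.range (2 * l + 1), ((n : ℝ) / 2 - l + k) :=
    Finset.prod_pos (hfac _ hm)
  have hden : ((n : ℝ) / 2) * ∏ a ∈ Finset.Icc 1 l, (((n : ℝ) / 2) ^ 2 - (a : ℝ) ^ 2) ≠ 0 := by
    rw [← prod_poly]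
    exact ne_of_gt hprodm
  refine ⟨?_, hden⟩
  have e1 : (n : ℝ) / 2 + j + 1 / 2 + (2 * (l : ℝ) + 1) / 2 = ((n : ℝ) / 2 + j - l) + (2 * l + 1 : ℕ) := by
    push_cast; ring
  have e2 : (n : ℝ) / 2 + 1 / 2 - (2 * (l : ℝ) + 1) / 2 = (n : ℝ) / 2 - l := by ring
  have e3 : (n : ℝ) / 2 + j + 1 / 2 - (2 * (l : ℝ) + 1) / 2 = (n : ℝ) / 2 + j - l := by ring
  have e4 : (n : ℝ) / 2 + 1 / 2 + (2 * (l : ℝ) + 1) / 2 = ((n : ℝ) / 2 - l) + (2 * l + 1 : ℕ) := by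
    push_cast; ring
  unfold Zspec
  rw [e1, e2, e3, e4, gamma_add_nat _ hJ, gamma_add_nat _ hm]
  have hGJ : Real.Gamma ((n : ℝ) / 2 + j - l) ≠ 0 := ne_of_gt (Real.Gamma_pos_of_pos hJ)
  have hGm : Real.Gamma ((n : ℝ) / 2 - l) ≠ 0 := ne_of_gt (Real.Gamma_pos_of_pos hm)
  have key : ∏ k ∈ Finset.range (2 * l + 1), ((n : ℝ) / 2 + j - l + k) =
      ((n : ℝ) / 2 + j) * ∏ a ∈ Finset.Icc 1 l, (((n : ℝ) / 2 + j) ^ 2 - (a : ℝ) ^ 2) := by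
    have := prod_poly l ((n : ℝ) / 2 + j)
    simpa using this
  have key2 : ∏ k ∈ Finset.range (2 * l + 1), ((n : ℝ) / 2 - l + k) =
      ((n : ℝ) / 2) * ∏ a ∈ Finset.Icc 1 l, (((n : ℝ) / 2) ^ 2 - (a : ℝ) ^ 2) :=
    prod_poly l ((n : ℝ) / 2)
  rw [← key, ← key2]
  have hPm := ne_of_gt hprodm
  rw [div_eq_div_iff (mul_ne_zero hGJ (mul_ne_zero hPm hGm)) hPm]
  ring
end

section
/- Let n ≥ 3 be an odd natural number, k ∈ ℕ with 1 ≤ k ≤ (n−1)/2, and l ∈ ℕ with l ≥ 1. Set a_l = −16kl² / ((n − 2k + 2)(n − 2k + 2 − 2l)(n − 2k + 2 + 2l)). Then for every real number L: ((n − 2k)/(n − 2k + 2))² · L² − l² + a_l · (n − 2k + 1)(L² − ((n − 2k + 2)/2)²) / (k(n − 2k + 2)) = ((n − 2k − 2l)(n − 2k + 2l) / ((n − 2k + 2 − 2l)(n − 2k + 2 + 2l))) · (L² − l²). -/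
/-- The eigenvalue computation for `A_{k,l} = A_{k,0}² − l²·Id + a_l·T_{k−1}T*_{k−1}` on
the summand `𝒱_ε(j, 0)` of the bundle `𝕋ᵏ` over the odd sphere `Sⁿ`, with
`a_l = −16kl²/((n−2k+2)(n−2k+2−2l)(n−2k+2+2l))`. -/
theorem Akl_eigenvalue (n k l : ℕ) (hn : Odd n) (hn3 : 3 ≤ n)
    (hk1 : 1 ≤ k) (hk2 : k ≤ (n - 1) / 2) (hl : 1 ≤ l) (L : ℝ) :
    ((((n : ℝ) - 2 * k) / ((n : ℝ) - 2 * k + 2)) ^ 2 * L ^ 2 - (l : ℝ) ^ 2) +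
      (-16 * k * (l : ℝ) ^ 2 /
          (((n : ℝ) - 2 * k + 2) * ((n : ℝ) - 2 * k + 2 - 2 * l) *
            ((n : ℝ) - 2 * k + 2 + 2 * l))) *
        (((n : ℝ) - 2 * k + 1) * (L ^ 2 - (((n : ℝ) - 2 * k + 2) / 2) ^ 2) /
          ((k : ℝ) * ((n : ℝ) - 2 * k + 2))) =
    ((((n : ℝ) - 2 * k - 2 * l) * ((n : ℝ) - 2 * k + 2 * l)) /
        ((((n : ℝ) - 2 * k + 2 - 2 * l)) * (((n : ℝ) - 2 * k + 2 + 2 * l)))) *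
      (L ^ 2 - (l : ℝ) ^ 2) := by
  obtain ⟨m, hm⟩ := hn
  have h2k : 2 * k ≤ n - 1 := by omega
  have hmn : (n : ℝ) = 2 * m + 1 := by exact_mod_cast congrArg (Nat.cast : ℕ → ℝ) hm
  have hkm : k ≤ m := by omega
  -- odd integer facts
  have hodd : ∀ z : ℤ, Odd z → ((z : ℝ) ≠ 0) := by
    intro z hz h
    obtain ⟨t, ht⟩ := hz
    have : z = 0 := by exact_mod_cast h
    omega
  have e1 : (n : ℝ) - 2 * k + 2 = ((n - 2 * (k:ℤ) + 2 : ℤ) : ℝ) := by push_cast; ring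
  have e2 : (n : ℝ) - 2 * k + 2 - 2 * l = ((n - 2 * (k:ℤ) + 2 - 2 * l : ℤ) : ℝ) := by
    push_cast; ring
  have e3 : (n : ℝ) - 2 * k + 2 + 2 * l = ((n - 2 * (k:ℤ) + 2 + 2 * l : ℤ) : ℝ) := by
    push_cast; ring
  have hz : Odd ((n : ℤ)) := ⟨m, by exact_mod_cast hm⟩
  have h1 : (n : ℝ) - 2 * k + 2 ≠ 0 := by
    rw [e1]; apply hodd; obtain ⟨t, ht⟩ := hz; exact ⟨t - k + 1, by omega⟩
  have h2 : (n : ℝ) - 2 * k + 2 - 2 * l ≠ 0 := by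
    rw [e2]; apply hodd; obtain ⟨t, ht⟩ := hz; exact ⟨t - k + 1 - l, by omega⟩
  have h3 : (n : ℝ) - 2 * k + 2 + 2 * l ≠ 0 := by
    rw [e3]; apply hodd; obtain ⟨t, ht⟩ := hz; exact ⟨t - k + 1 + l, by omega⟩
  have hk : (k : ℝ) ≠ 0 := by positivity
  field_simp
  ring
end
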